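/- Under the extended Case-C2 setup, every path from s_1 to d_1 contains v_1 or v_3; consequently (since every path from s_2 to d_1 contains v_1) the removal of the pair {v_1,v_3} disconnects d_1 from both sources. -/

import Mathlib

open List

/-- `IsPath E p u w` : the nonempty list `p` of vertices is a directed path
from `u` to `w` with respect to the edge relation `E`. -/
def IsPath {V : Type*} (E : V → V → Prop) (p : List V) (u w : V) : Prop :=
  p ≠ [] ∧ p.head? = some u ∧ p.getLast? = some w ∧ p.Chain' E

/-- `Reaches E u w` (written `u ~> w`) : there is a directed path from `u` to `w`. -/
def Reaches {V : Type*} (E : V → V → Prop) (u w : V) : Prop :=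
  ∃ p, IsPath E p u w

/-- A two-unicast layered network: a finite directed graph, with two sources
`s1, s2` and two destinations `d1, d2` (all four distinct), vertices partitioned
into layers `1, ..., r` such that every edge goes from a layer to the next one,
the first layer is `{s1, s2}`, the last layer is `{d1, d2}`, and each source
reaches its corresponding destination. -/
structure TwoUnicastNetwork (V : Type*) [Fintype V] where
  E : V → V → Prop
  s1 : V
  s2 : V
  d1 : V
  d2 : V
  r : ℕ
  layer : V → ℕ
  layer_pos : ∀ v, 1 ≤ layer v
  layer_le : ∀ v, layer v ≤ r
  edge_layer : ∀ u w, E u w → layer w = layer u + 1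
  s_ne : s1 ≠ s2
  d_ne : d1 ≠ d2
  sd_ne : ∀ s d, (s = s1 ∨ s = s2) → (d = d1 ∨ d = d2) → s ≠ d
  first_layer : ∀ v, layer v = 1 ↔ v = s1 ∨ v = s2
  last_layer : ∀ v, layer v = r ↔ v = d1 ∨ v = d2
  conn1 : Reaches E s1 d1
  conn2 : Reaches E s2 d2

/-- `InterferesOn N S Ri srcOther v` : within the induced subgraph `G[S]`, the
node `v` causes interference on the path `Ri` : `v ∈ S`, `v ∉ Ri`, there is an
edge (inside `G[S]`) from `v` into a node of `Ri`, and there is a path from the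
other source `srcOther` to `v` lying inside `G[S]` and disjoint from `Ri`. -/
def InterferesOn {V : Type*} [Fintype V] (N : TwoUnicastNetwork V) (S : Set V)
    (Ri : List V) (srcOther : V) (v : V) : Prop :=
  v ∈ S ∧ v ∉ Ri ∧ (∃ w ∈ Ri, w ∈ S ∧ N.E v w) ∧
    ∃ q, IsPath N.E q srcOther v ∧ (∀ x ∈ q, x ∈ S) ∧ ∀ x ∈ q, x ∉ Ri

/-- `n_i(G[S])` : the number of nodes causing interference on `Ri` within the
induced subgraph `G[S]`, the interfering path coming from `srcOther`. -/
noncomputable def nInterf {V : Type*} [Fintype V] (N : TwoUnicastNetwork V)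
    (S : Set V) (Ri : List V) (srcOther : V) : ℕ :=
  {v | InterferesOn N S Ri srcOther v}.ncard

/-- `n_i^D` : the number of nodes of the other path `Rother` causing (direct)
interference on `Ri` in `G`. -/
noncomputable def nDirect {V : Type*} [Fintype V] (N : TwoUnicastNetwork V)
    (Ri Rother : List V) (srcOther : V) : ℕ :=
  {v | InterferesOn N Set.univ Ri srcOther v ∧ v ∈ Rother}.ncard

/-- The pair `(R1, R2)` (paths `s1 → d1` and `s2 → d2`) has manageable
interference: there is `S ⊇ R1 ∪ R2` with `n_1(G[S]) ≠ 1` and `n_2(G[S]) ≠ 1`. -/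
def Manageable {V : Type*} [Fintype V] (N : TwoUnicastNetwork V)
    (R1 R2 : List V) : Prop :=
  ∃ S : Set V, (∀ x ∈ R1, x ∈ S) ∧ (∀ x ∈ R2, x ∈ S) ∧
    nInterf N S R1 N.s2 ≠ 1 ∧ nInterf N S R2 N.s1 ≠ 1

/-- The pair `(R1, R2)` has `(s1,d1)`-manageable interference. -/
def Manageable1 {V : Type*} [Fintype V] (N : TwoUnicastNetwork V)
    (R1 R2 : List V) : Prop :=
  ∃ S : Set V, (∀ x ∈ R1, x ∈ S) ∧ (∀ x ∈ R2, x ∈ S) ∧ nInterf N S R1 N.s2 ≠ 1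

/-- The pair `(R1, R2)` has `(s2,d2)`-manageable interference. -/
def Manageable2 {V : Type*} [Fintype V] (N : TwoUnicastNetwork V)
    (R1 R2 : List V) : Prop :=
  ∃ S : Set V, (∀ x ∈ R1, x ∈ S) ∧ (∀ x ∈ R2, x ∈ S) ∧ nInterf N S R2 N.s1 ≠ 1

/-- Removal of the vertex `v` disconnects `a` from `b` :
every path from `a` to `b` contains `v`. -/
def CutVert {V : Type*} [Fintype V] (N : TwoUnicastNetwork V) (v a b : V) : Prop :=
  ∀ p, IsPath N.E p a b → v ∈ p


lemma isPath_cons {V : Type*} {E : V → V → Prop} {p : List V} {x w b : V}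
    (hp : IsPath E p w b) (hx : E x w) : IsPath E (x :: p) x b := by
  obtain ⟨hne, hh, hl, hc⟩ := hp
  refine ⟨by simp, by simp, ?_, ?_⟩
  · cases p with
    | nil => exact absurd rfl hne
    | cons a t => rw [List.getLast?_cons_cons]; exact hl
  · exact List.isChain_cons.mpr ⟨fun y hy => by rw [hh] at hy; cases hy; exact hx, hc⟩

lemma isPath_splice {V : Type*} {E : V → V → Prop} {p q : List V} {a x b : V}
    (hp : IsPath E p a x) (hq : IsPath E q x b) :
    ∃ r, IsPath E r a b ∧ ∀ y ∈ r, y ∈ p ∨ y ∈ q := by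
  obtain ⟨hne, hh, hl, hc⟩ := hp
  obtain ⟨hne', hh', hl', hc'⟩ := hq
  cases q with
  | nil => exact absurd rfl hne'
  | cons c t =>
    have hcx : c = x := by simpa using hh'
    subst hcx
    cases t with
    | nil =>
      have hbx : c = b := by simpa using hl'
      subst hbx
      exact ⟨p, ⟨hne, hh, hl, hc⟩, fun y hy => Or.inl hy⟩
    | cons y t' =>
      refine ⟨p ++ (y :: t'), ⟨by simp [hne], ?_, ?_, ?_⟩, ?_⟩
      · cases p with
        | nil => exact absurd rfl hne
        | cons a' t'' => simpa using hh
      · rw [List.getLast?_append]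
        rw [List.getLast?_cons_cons] at hl'
        rw [hl']
        rfl
      · refine List.IsChain.append hc (List.isChain_cons_cons.mp hc').2 ?_
        intro u hu v hv
        rw [hl] at hu; cases hu
        simp only [List.head?_cons, Option.mem_def, Option.some.injEq] at hv
        subst hv
        exact (List.isChain_cons_cons.mp hc').1
      · intro z hz
        rcases List.mem_append.mp hz with h | h
        · exact Or.inl h
        · exact Or.inr (List.mem_cons_of_mem _ h)

lemma isPath_split {V : Type*} {E : V → V → Prop} {p : List V} {a b x : V}
    (hp : IsPath E p a b) (hx : x ∈ p) :
    ∃ p1 p2, IsPath E p1 a x ∧ IsPath E p2 x b ∧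
      (∀ y ∈ p1, y ∈ p) ∧ (∀ y ∈ p2, y ∈ p) := by
  obtain ⟨l1, l2, rfl⟩ := List.append_of_mem hx
  obtain ⟨hne, hh, hl, hc⟩ := hp
  refine ⟨l1 ++ [x], x :: l2, ⟨by simp, ?_, by simp, ?_⟩, ⟨by simp, by simp, ?_, ?_⟩, ?_, ?_⟩
  · cases l1 with
    | nil => simpa using hh
    | cons a' t => simpa using hh
  · exact hc.prefix ⟨l2, by simp⟩
  · rw [← hl]
    cases l2 with
    | nil => simp
    | cons c t =>
      rw [List.getLast?_append, List.getLast?_cons_cons,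
        List.getLast?_eq_getLast (l := c :: t) (by simp)]
      rfl
  · exact hc.suffix ⟨l1, rfl⟩
  · intro y hy
    rcases List.mem_append.mp hy with h | h
    · exact List.mem_append.mpr (Or.inl h)
    · simp at h; simp [h]
  · intro y hy
    rcases List.mem_cons.mp hy with h | h
    · simp [h]
    · simp [h]

theorem statement14 {V : Type*} [Fintype V]
    (N : TwoUnicastNetwork V)
    (P11 P22 : List V)
    (v1 v2 : V)
    (hP11 : IsPath N.E P11 N.s1 N.d1)
    (hP22 : IsPath N.E P22 N.s2 N.d2)
    (hdisj : P11.Disjoint P22)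
    (hNoMan : ∀ R1 R2 : List V, IsPath N.E R1 N.s1 N.d1 → IsPath N.E R2 N.s2 N.d2 →
      R1.Disjoint R2 → ¬ Manageable N R1 R2)
    (hn1 : nInterf N Set.univ P11 N.s2 = 1)
    (hn1D : nDirect N P11 P22 N.s2 = 1)
    (hv2unique : {v | InterferesOn N Set.univ P11 N.s2 v} = {v2})
    (hv2P22 : v2 ∈ P22)
    (hv1P11 : v1 ∈ P11)
    (hv2v1 : N.E v2 v1)
    (hedgeunique : ∀ u ∈ P22, ∀ w ∈ P11, N.E u w → u = v2 ∧ w = v1)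
    (Q11 Z11 : List V)
    (v3 v4 : V)
    (hP21cut : ∀ p : List V, IsPath N.E p N.s2 N.d1 → v2 ∈ p ∧ v1 ∈ p)
    (hQ11 : IsPath N.E Q11 N.s1 N.d1)
    (hv1Q11 : v1 ∉ Q11)
    (hQ11disj : Q11.Disjoint P22)
    (hQnoDirect : {v | InterferesOn N Set.univ Q11 N.s2 v ∧ v ∈ P22} = ∅)
    (hv3Q11 : v3 ∈ Q11)
    (hv3unique : {v | InterferesOn N Set.univ P22 N.s1 v ∧ v ∈ Q11} = {v3})
    (hv4P22 : v4 ∈ P22)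
    (hv3v4 : N.E v3 v4)
    (hv3v4unique : ∀ w ∈ P22, N.E v3 w → w = v4)
    (hP12cut : ∀ p : List V, IsPath N.E p N.s1 N.d2 → v3 ∈ p ∧ v4 ∈ p)
    (hZ11 : IsPath N.E Z11 N.s1 N.d1)
    (hv3Z11 : v3 ∉ Z11)
    (hv1Z11 : v1 ∈ Z11)
    (hZ11disj : Z11.Disjoint P22)
    (hZnoDirect : {v | InterferesOn N Set.univ P22 N.s1 v ∧ v ∈ Z11} = ∅)
    (hv2Zunique : {v | InterferesOn N Set.univ Z11 N.s2 v ∧ v ∈ P22} = {v2})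
    (hv2v1unique : ∀ w ∈ Z11, N.E v2 w → w = v1) :
    (∀ p : List V, IsPath N.E p N.s1 N.d1 → v1 ∈ p ∨ v3 ∈ p) ∧
    (∀ p : List V, IsPath N.E p N.s2 N.d1 → v1 ∈ p ∨ v3 ∈ p) := by
  have hv3P22 : v3 ∉ P22 := fun hc => hQ11disj hv3Q11 hc
  have hv1P22 : v1 ∉ P22 := fun hc => hdisj hv1P11 hc
  have key : ∀ p : List V, IsPath N.E p N.s1 N.d1 → v1 ∈ p ∨ v3 ∈ p := by
    intro p hp
    by_contra h
    push_neg at h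
    obtain ⟨hv1, hv3⟩ := h
    -- Step 1: p is disjoint from P22
    have pdisj : p.Disjoint P22 := by
      intro x hxp hxP22
      obtain ⟨p1, p2, hp1, hp2, hp1sub, hp2sub⟩ := isPath_split hp hxp
      obtain ⟨q1, q2, hq1, hq2, hq1sub, hq2sub⟩ := isPath_split hP22 hxP22
      obtain ⟨r, hr, hrsub⟩ := isPath_splice hp1 hq2
      rcases hrsub v3 (hP12cut r hr).1 with h | h
      · exact hv3 (hp1sub _ h)
      · exact hv3P22 (hq2sub _ h)
    -- Step 2: with S = p ∪ P22, both interference sets are empty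
    set S : Set V := {x | x ∈ p ∨ x ∈ P22} with hS
    have hA : {v | InterferesOn N S p N.s2 v} = ∅ := by
      ext v
      simp only [Set.mem_setOf_eq, Set.mem_empty_iff_false, iff_false]
      rintro ⟨hvS, hvp, ⟨w, hwp, hwS, hvw⟩, -⟩
      have hvP22 : v ∈ P22 := hvS.resolve_left hvp
      obtain ⟨q1, q2, hq1, hq2, hq1sub, hq2sub⟩ := isPath_split hP22 hvP22
      obtain ⟨p1, p2, hp1, hp2, hp1sub, hp2sub⟩ := isPath_split hp hwp
      have hvp2 : IsPath N.E (v :: p2) v N.d1 := isPath_cons hp2 hvw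
      obtain ⟨r, hr, hrsub⟩ := isPath_splice hq1 hvp2
      rcases hrsub v1 (hP21cut r hr).2 with h | h
      · exact hv1P22 (hq1sub _ h)
      · rcases List.mem_cons.mp h with h | h
        · exact hv1P22 (h ▸ hvP22)
        · exact hv1 (hp2sub _ h)
    have hB : {v | InterferesOn N S P22 N.s1 v} = ∅ := by
      ext v
      simp only [Set.mem_setOf_eq, Set.mem_empty_iff_false, iff_false]
      rintro ⟨hvS, hvP22, ⟨w, hwP22, hwS, hvw⟩, q, hq, hqS, hqdisj⟩
      have hvp : v ∈ p := hvS.resolve_right hvP22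
      obtain ⟨q1, q2, hq1, hq2, hq1sub, hq2sub⟩ := isPath_split hP22 hwP22
      have hvq2 : IsPath N.E (v :: q2) v N.d2 := isPath_cons hq2 hvw
      obtain ⟨r, hr, hrsub⟩ := isPath_splice hq hvq2
      rcases hrsub v3 (hP12cut r hr).1 with h | h
      · rcases hqS v3 h with h' | h'
        · exact hv3 h'
        · exact hv3P22 h'
      · rcases List.mem_cons.mp h with h | h
        · exact hv3 (h ▸ hvp)
        · exact hv3P22 (hq2sub _ h)
    refine hNoMan p P22 hp hP22 pdisj
      ⟨S, fun x hx => Or.inl hx, fun x hx => Or.inr hx, ?_, ?_⟩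
    · simp only [nInterf, hA, Set.ncard_empty]
      exact zero_ne_one
    · simp only [nInterf, hB, Set.ncard_empty]
      exact zero_ne_one
  exact ⟨key, fun p hp => Or.inl (hP21cut p hp).2⟩
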